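/- Suppose u, v are C^2 radial solutions on the ball B_R with u'(0)=v'(0)=0, u(R)=v(R)=0, satisfying the radial system -(r^{N-1}u')' = r^{N-1}H_v(u,v), -(r^{N-1}v')' = r^{N-1}H_u(u,v), with H_u(s,t)/s > 0 and H_v(s,t)/t > 0 for s,t ≠ 0. If v has exactly 2 nodal zones, with v > 0 on [0,t), v(t)=0, v < 0 on (t,R), then: u has exactly one interior zero; u > 0 on its first nodal zone; u has exactly one critical point σ ∈ (t, R), u is strictly decreasing on (0,σ) and strictly increasing on (σ,R). -/

import Mathlib

open Set

/-- Basic facts about the "flux" function `F r = r ^ α * derivWithin f (Icc 0 R) r`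
associated to a `C²` function `f` on `[0,R]`: it is continuous on `[0,R]`, vanishes at
`0`, and on the interior it agrees (together with its derivative) with
`r ^ α * deriv f r`. -/
lemma flux_facts {R α : ℝ} (hR : 0 < R) (hα : 1 ≤ α) {f : ℝ → ℝ}
    (hf : ContDiffOn ℝ 2 f (Icc 0 R)) :
    ContinuousOn (fun r => r ^ α * derivWithin f (Icc 0 R) r) (Icc 0 R) ∧
    (0:ℝ) ^ α * derivWithin f (Icc 0 R) 0 = 0 ∧
    (∀ r ∈ Ioo (0:ℝ) R, deriv f r = derivWithin f (Icc 0 R) r) ∧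
    (∀ r ∈ Ioo (0:ℝ) R, deriv (fun r => r ^ α * derivWithin f (Icc 0 R) r) r
        = deriv (fun ρ => ρ ^ α * deriv f ρ) r) := by
  have hαpos : (0:ℝ) < α := lt_of_lt_of_le one_pos hα
  have hcg : ContinuousOn (derivWithin f (Icc 0 R)) (Icc 0 R) :=
    hf.continuousOn_derivWithin (uniqueDiffOn_Icc hR) (by norm_num)
  have hcr : ContinuousOn (fun r : ℝ => r ^ α) (Icc 0 R) := fun x _ =>
    (Real.continuousAt_rpow_const x α (Or.inr hαpos.le)).continuousWithinAt
  have heqd : ∀ r ∈ Ioo (0:ℝ) R, deriv f r = derivWithin f (Icc 0 R) r := by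
    intro r hr
    exact (derivWithin_of_mem_nhds (Icc_mem_nhds hr.1 hr.2)).symm
  refine ⟨hcr.mul hcg, by rw [Real.zero_rpow hαpos.ne', zero_mul], heqd, ?_⟩
  intro r hr
  apply Filter.EventuallyEq.deriv_eq
  filter_upwards [Ioo_mem_nhds hr.1 hr.2] with x hx
  rw [heqd x hx]

/-- If the coupling term is everywhere positive, the flux is strictly decreasing from `0`,
hence `f' < 0`, hence `f` is strictly decreasing; since `f R = 0`, `f > 0` before `R`. -/
lemma flux_decr {R α : ℝ} (hR : 0 < R) (hα : 1 ≤ α) {f h : ℝ → ℝ}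
    (hf : ContDiffOn ℝ 2 f (Icc 0 R))
    (heq : ∀ r ∈ Ioo (0:ℝ) R, deriv (fun ρ => ρ ^ α * deriv f ρ) r = -(r ^ α * h r))
    (hh : ∀ r ∈ Ioo (0:ℝ) R, 0 < h r) (hfR : f R = 0) :
    ∀ r ∈ Ico (0:ℝ) R, 0 < f r := by
  obtain ⟨hFc, hF0, hg, hdF⟩ := flux_facts hR hα hf
  have hFanti : StrictAntiOn (fun r => r ^ α * derivWithin f (Icc 0 R) r) (Icc 0 R) := by
    apply strictAntiOn_of_deriv_neg (convex_Icc 0 R) hFc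
    intro x hx
    rw [interior_Icc] at hx
    rw [hdF x hx, heq x hx]
    have h1 : 0 < x ^ α := Real.rpow_pos_of_pos hx.1 α
    have h2 := hh x hx
    nlinarith
  have hderiv_neg : ∀ r ∈ Ioo (0:ℝ) R, deriv f r < 0 := by
    intro r hr
    have h1 : r ^ α * derivWithin f (Icc 0 R) r < 0 ^ α * derivWithin f (Icc 0 R) 0 :=
      hFanti (left_mem_Icc.mpr hR.le) ⟨hr.1.le, hr.2.le⟩ hr.1
    rw [hF0] at h1
    have h2 : 0 < r ^ α := Real.rpow_pos_of_pos hr.1 α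
    rw [hg r hr]
    nlinarith
  have hanti : StrictAntiOn f (Icc 0 R) := strictAntiOn_of_deriv_neg (convex_Icc 0 R)
    hf.continuousOn (by rw [interior_Icc]; exact hderiv_neg)
  intro r hr
  have := hanti ⟨hr.1, hr.2.le⟩ (right_mem_Icc.mpr hR.le) hr.2
  rw [hfR] at this
  linarith

/-- Part B (case `m = 2`) of the profile proposition on a ball: for the radial
Hamiltonian system `-(r^{N-1}u')' = r^{N-1}H_v(u,v)`, `-(r^{N-1}v')' = r^{N-1}H_u(u,v)`
with coupling `H_u(s,t)/s > 0`, `H_v(s,t)/t > 0` for `s,t ≠ 0`, if `v` has exactly two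
nodal zones (`v > 0` on `[0,t₀)`, `v(t₀)=0`, `v < 0` on `(t₀,R)`), then `u` has exactly
one interior zero `z`, is positive on its first nodal zone and negative on the second,
and has exactly one critical point `σ ∈ (t₀,R)`, with `u` strictly decreasing on
`(0,σ)` and strictly increasing on `(σ,R)`. -/
theorem radial_profile_ball_two_nodal_zones (N : ℕ) (hN : 2 ≤ N) (R : ℝ) (hR : 0 < R)
    (u v : ℝ → ℝ) (Hu Hv : ℝ → ℝ → ℝ)
    (hu : ContDiffOn ℝ 2 u (Icc 0 R)) (hv : ContDiffOn ℝ 2 v (Icc 0 R))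
    (hequ : ∀ r ∈ Ioo (0:ℝ) R,
      deriv (fun ρ => ρ ^ ((N : ℝ) - 1) * deriv u ρ) r
        = -(r ^ ((N : ℝ) - 1) * Hv (u r) (v r)))
    (heqv : ∀ r ∈ Ioo (0:ℝ) R,
      deriv (fun ρ => ρ ^ ((N : ℝ) - 1) * deriv v ρ) r
        = -(r ^ ((N : ℝ) - 1) * Hu (u r) (v r)))
    (hu0 : deriv u 0 = 0) (hv0 : deriv v 0 = 0)
    (huR : u R = 0) (hvR : v R = 0)
    (hH1u : ∀ s t : ℝ, s ≠ 0 → 0 < Hu s t / s)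
    (hH1v : ∀ s t : ℝ, t ≠ 0 → 0 < Hv s t / t)
    (t₀ : ℝ) (ht₀ : t₀ ∈ Ioo (0:ℝ) R)
    (hv1 : ∀ r ∈ Ico (0:ℝ) t₀, 0 < v r) (hvt₀ : v t₀ = 0)
    (hv2 : ∀ r ∈ Ioo t₀ R, v r < 0) :
    ∃ σ ∈ Ioo t₀ R, ∃ z ∈ Ioo (0:ℝ) R,
      u z = 0 ∧ (∀ r ∈ Ico (0:ℝ) z, 0 < u r) ∧ (∀ r ∈ Ioo z R, u r < 0) ∧
      deriv u σ = 0 ∧ (∀ r ∈ Ioo (0:ℝ) σ, deriv u r < 0) ∧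
      (∀ r ∈ Ioo σ R, 0 < deriv u r) := by
  set α : ℝ := (N : ℝ) - 1 with hαdef
  have hN2 : (2:ℝ) ≤ (N:ℝ) := by exact_mod_cast hN
  have hα : 1 ≤ α := by rw [hαdef]; linarith
  obtain ⟨ht₀0, ht₀R⟩ := ht₀
  obtain ⟨hFc, hF0, hg, hdF⟩ := flux_facts hR hα hu
  -- sign of Hv(u,v)
  have hHvpos : ∀ r ∈ Ioo (0:ℝ) t₀, 0 < Hv (u r) (v r) := by
    intro r hr
    have h2 : 0 < v r := hv1 r ⟨hr.1.le, hr.2⟩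
    have h1 := hH1v (u r) (v r) h2.ne'
    have := mul_pos h1 h2
    rwa [div_mul_cancel₀ _ h2.ne'] at this
  have hHvneg : ∀ r ∈ Ioo t₀ R, Hv (u r) (v r) < 0 := by
    intro r hr
    have h2 : v r < 0 := hv2 r hr
    have h1 := hH1v (u r) (v r) h2.ne
    have := mul_neg_of_pos_of_neg h1 h2
    rwa [div_mul_cancel₀ _ h2.ne] at this
  -- flux of u is strictly decreasing on [0,t₀], strictly increasing on [t₀,R]
  have hFanti : StrictAntiOn (fun r => r ^ α * derivWithin u (Icc 0 R) r) (Icc 0 t₀) := by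
    apply strictAntiOn_of_deriv_neg (convex_Icc 0 t₀)
      (hFc.mono (Icc_subset_Icc le_rfl ht₀R.le))
    intro x hx
    rw [interior_Icc] at hx
    have hx' : x ∈ Ioo (0:ℝ) R := ⟨hx.1, hx.2.trans ht₀R⟩
    rw [hdF x hx', hequ x hx']
    have h1 : 0 < x ^ α := Real.rpow_pos_of_pos hx.1 α
    have h2 := hHvpos x hx
    nlinarith
  have hFmono : StrictMonoOn (fun r => r ^ α * derivWithin u (Icc 0 R) r) (Icc t₀ R) := by
    apply strictMonoOn_of_deriv_pos (convex_Icc t₀ R)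
      (hFc.mono (Icc_subset_Icc ht₀0.le le_rfl))
    intro x hx
    rw [interior_Icc] at hx
    have hx' : x ∈ Ioo (0:ℝ) R := ⟨ht₀0.trans hx.1, hx.2⟩
    rw [hdF x hx', hequ x hx']
    have h1 : 0 < x ^ α := Real.rpow_pos_of_pos (ht₀0.trans hx.1) α
    have h2 := hHvneg x hx
    nlinarith
  -- flux negative on (0, t₀]
  have hFneg : ∀ r ∈ Ioc (0:ℝ) t₀, r ^ α * derivWithin u (Icc 0 R) r < 0 := by
    intro r hr
    have := hFanti (left_mem_Icc.mpr ht₀0.le) ⟨hr.1.le, hr.2⟩ hr.1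
    simpa [hF0] using this
  have hFt₀ : t₀ ^ α * derivWithin u (Icc 0 R) t₀ < 0 := hFneg t₀ ⟨ht₀0, le_rfl⟩
  -- u' < 0 on (0, t₀]
  have hduneg : ∀ r ∈ Ioc (0:ℝ) t₀, deriv u r < 0 := by
    intro r hr
    have h1 := hFneg r hr
    have h2 : 0 < r ^ α := Real.rpow_pos_of_pos hr.1 α
    rw [hg r ⟨hr.1, lt_of_le_of_lt hr.2 ht₀R⟩]
    nlinarith
  -- there is r₁ ∈ (t₀, R) with positive flux
  have hr₁ : ∃ r₁ ∈ Ioo t₀ R, 0 < r₁ ^ α * derivWithin u (Icc 0 R) r₁ := by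
    by_contra hcon
    push_neg at hcon
    -- then u' ≤ 0 on (0,R)
    have hdnp : ∀ x ∈ Ioo (0:ℝ) R, deriv u x ≤ 0 := by
      intro x hx
      rcases le_or_gt x t₀ with h | h
      · exact (hduneg x ⟨hx.1, h⟩).le
      · have h1 := hcon x ⟨h, hx.2⟩
        have h2 : 0 < x ^ α := Real.rpow_pos_of_pos hx.1 α
        rw [hg x hx]
        nlinarith
    have huanti : AntitoneOn u (Icc 0 R) := by
      apply antitoneOn_of_deriv_nonpos (convex_Icc 0 R) hu.continuousOn
      · rw [interior_Icc]
        exact (hu.differentiableOn (by norm_num)).mono Ioo_subset_Icc_self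
      · rw [interior_Icc]; exact hdnp
    have hunn : ∀ r ∈ Icc (0:ℝ) R, 0 ≤ u r := by
      intro r hr
      have := huanti hr (right_mem_Icc.mpr hR.le) hr.2
      rwa [huR] at this
    -- u > 0 on [0, R)
    have hupos : ∀ r ∈ Ico (0:ℝ) R, 0 < u r := by
      intro r hr
      rcases (hunn r ⟨hr.1, hr.2.le⟩).lt_or_eq with h | h
      · exact h
      · exfalso
        have hzero : ∀ x ∈ Icc r R, u x = 0 := by
          intro x hx
          have h1 := huanti ⟨hr.1, hr.2.le⟩ ⟨hr.1.trans hx.1, hx.2⟩ hx.1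
          have h2 := hunn x ⟨hr.1.trans hx.1, hx.2⟩
          rw [← h] at *
          linarith
        set m : ℝ := max r t₀ with hm
        have hmR : m < R := max_lt hr.2 ht₀R
        have hder0 : ∀ x ∈ Ioo m R, deriv u x = 0 := by
          intro x hx
          have hev : u =ᶠ[nhds x] fun _ => 0 := by
            filter_upwards [Ioo_mem_nhds hx.1 hx.2] with y hy
            exact hzero y ⟨le_trans (le_max_left r t₀) hy.1.le, hy.2.le⟩
          rw [hev.deriv_eq]
          simp
        set a : ℝ := m + (R - m)/3 with ha
        set b : ℝ := m + 2*(R - m)/3 with hb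
        have haI : a ∈ Ioo m R := ⟨by rw [ha]; linarith, by rw [ha]; linarith⟩
        have hbI : b ∈ Ioo m R := ⟨by rw [hb]; linarith, by rw [hb]; linarith⟩
        have hab : a < b := by rw [ha, hb]; linarith
        have hmt : t₀ ≤ m := le_max_right r t₀
        have haM : a ∈ Icc t₀ R := ⟨hmt.trans haI.1.le, haI.2.le⟩
        have hbM : b ∈ Icc t₀ R := ⟨hmt.trans hbI.1.le, hbI.2.le⟩
        have hlt := hFmono haM hbM hab
        have hga : derivWithin u (Icc 0 R) a = 0 := by
          rw [← hg a ⟨lt_of_le_of_lt (le_trans ht₀0.le hmt) haI.1, haI.2⟩]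
          exact hder0 a haI
        have hgb : derivWithin u (Icc 0 R) b = 0 := by
          rw [← hg b ⟨lt_of_le_of_lt (le_trans ht₀0.le hmt) hbI.1, hbI.2⟩]
          exact hder0 b hbI
        simp only [hga, hgb, mul_zero] at hlt
        exact lt_irrefl 0 hlt
    -- then Hu(u,v) > 0, hence v > 0 on [0,R): contradiction with hv2
    have hvpos : ∀ r ∈ Ico (0:ℝ) R, 0 < v r := by
      apply flux_decr hR hα hv heqv _ hvR
      intro r hr
      have h2 : 0 < u r := hupos r ⟨hr.1.le, hr.2⟩
      have h1 := hH1u (u r) (v r) h2.ne'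
      have := mul_pos h1 h2
      rwa [div_mul_cancel₀ _ h2.ne'] at this
    have hmid : (t₀ + R)/2 ∈ Ioo t₀ R := ⟨by linarith, by linarith⟩
    have hA := hv2 _ hmid
    have hB := hvpos ((t₀ + R)/2) ⟨by linarith, hmid.2⟩
    linarith
  obtain ⟨r₁, hr₁I, hr₁pos⟩ := hr₁
  -- find σ by the intermediate value theorem for the flux on [t₀, r₁]
  obtain ⟨σ, hσI, hσ0⟩ : ∃ σ ∈ Ioo t₀ r₁, σ ^ α * derivWithin u (Icc 0 R) σ = 0 := by
    have hcont : ContinuousOn (fun r => r ^ α * derivWithin u (Icc 0 R) r) (Icc t₀ r₁) :=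
      hFc.mono (Icc_subset_Icc ht₀0.le hr₁I.2.le)
    have h0mem : (0:ℝ) ∈ Ioo (t₀ ^ α * derivWithin u (Icc 0 R) t₀)
        (r₁ ^ α * derivWithin u (Icc 0 R) r₁) := ⟨hFt₀, hr₁pos⟩
    obtain ⟨σ, hσI, hσ0⟩ := intermediate_value_Ioo hr₁I.1.le hcont h0mem
    exact ⟨σ, hσI, hσ0⟩
  have hσIoo : σ ∈ Ioo t₀ R := ⟨hσI.1, hσI.2.trans hr₁I.2⟩
  have hσ0' : 0 < σ := ht₀0.trans hσIoo.1
  have hσR : σ < R := hσIoo.2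
  have hσα : 0 < σ ^ α := Real.rpow_pos_of_pos hσ0' α
  -- derivative signs
  have hduσ : deriv u σ = 0 := by
    rw [hg σ ⟨hσ0', hσR⟩]
    exact (mul_eq_zero.mp hσ0).resolve_left hσα.ne'
  have hdneg : ∀ r ∈ Ioo (0:ℝ) σ, deriv u r < 0 := by
    intro r hr
    rcases le_or_gt r t₀ with h | h
    · exact hduneg r ⟨hr.1, h⟩
    · have h1 : r ^ α * derivWithin u (Icc 0 R) r < σ ^ α * derivWithin u (Icc 0 R) σ :=
        hFmono ⟨h.le, (hr.2.trans hσR).le⟩ ⟨hσIoo.1.le, hσR.le⟩ hr.2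
      rw [hσ0] at h1
      have h2 : 0 < r ^ α := Real.rpow_pos_of_pos hr.1 α
      rw [hg r ⟨hr.1, hr.2.trans hσR⟩]
      nlinarith
  have hdpos : ∀ r ∈ Ioo σ R, 0 < deriv u r := by
    intro r hr
    have h1 : σ ^ α * derivWithin u (Icc 0 R) σ < r ^ α * derivWithin u (Icc 0 R) r :=
      hFmono ⟨hσIoo.1.le, hσR.le⟩ ⟨(hσIoo.1.trans hr.1).le, hr.2.le⟩ hr.1
    rw [hσ0] at h1
    have h2 : 0 < r ^ α := Real.rpow_pos_of_pos (hσ0'.trans hr.1) α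
    rw [hg r ⟨hσ0'.trans hr.1, hr.2⟩]
    nlinarith
  -- monotonicity of u
  have huanti : StrictAntiOn u (Icc 0 σ) := by
    apply strictAntiOn_of_deriv_neg (convex_Icc 0 σ)
      (hu.continuousOn.mono (Icc_subset_Icc le_rfl hσR.le))
    rw [interior_Icc]; exact hdneg
  have humono : StrictMonoOn u (Icc σ R) := by
    apply strictMonoOn_of_deriv_pos (convex_Icc σ R)
      (hu.continuousOn.mono (Icc_subset_Icc hσ0'.le le_rfl))
    rw [interior_Icc]; exact hdpos
  have huσneg : u σ < 0 := by
    have := humono (left_mem_Icc.mpr hσR.le) (right_mem_Icc.mpr hσR.le) hσR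
    rwa [huR] at this
  -- u 0 > 0
  have hu0pos : 0 < u 0 := by
    by_contra hcon
    push_neg at hcon
    have huneg : ∀ r ∈ Ioo (0:ℝ) R, u r < 0 := by
      intro r hr
      rcases le_or_gt r σ with h | h
      · have := huanti (left_mem_Icc.mpr hσ0'.le) ⟨hr.1.le, h⟩ hr.1
        linarith
      · have := humono ⟨h.le, hr.2.le⟩ (right_mem_Icc.mpr hσR.le) hr.2
        rwa [huR] at this
    -- apply flux_decr to -v with coupling -Hu(u,v)
    have hvneg : ∀ r ∈ Ico (0:ℝ) R, 0 < -v r := by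
      refine flux_decr (h := fun r => -Hu (u r) (v r)) hR hα hv.neg ?_ ?_ (by simp [hvR])
      · intro r hr
        have heq1 : (fun ρ => ρ ^ α * deriv (fun x => -v x) ρ)
            = fun ρ => -(ρ ^ α * deriv v ρ) := by
          funext ρ
          rw [deriv.fun_neg, mul_neg]
        rw [heq1, deriv.fun_neg, heqv r hr]
        ring
      · intro r hr
        have h2 : u r < 0 := huneg r hr
        have h1 := hH1u (u r) (v r) h2.ne
        have := mul_neg_of_pos_of_neg h1 h2
        rw [div_mul_cancel₀ _ h2.ne] at this
        show 0 < -Hu (u r) (v r)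
        linarith
    have hC := hv1 (t₀/2) ⟨by linarith, by linarith⟩
    have hD := hvneg (t₀/2) ⟨by linarith, by linarith⟩
    linarith
  -- the zero z of u
  obtain ⟨z, hzI, hz0⟩ : ∃ z ∈ Ioo (0:ℝ) σ, u z = 0 := by
    have hcont : ContinuousOn u (Icc 0 σ) :=
      hu.continuousOn.mono (Icc_subset_Icc le_rfl hσR.le)
    obtain ⟨z, hzI, hz0⟩ := intermediate_value_Ioo' hσ0'.le hcont
      (show (0:ℝ) ∈ Ioo (u σ) (u 0) from ⟨huσneg, hu0pos⟩)
    exact ⟨z, hzI, hz0⟩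
  refine ⟨σ, hσIoo, z, ⟨hzI.1, hzI.2.trans hσR⟩, hz0, ?_, ?_, hduσ, hdneg, hdpos⟩
  · intro r hr
    have := huanti ⟨hr.1, (hr.2.trans hzI.2).le⟩ ⟨hzI.1.le, hzI.2.le⟩ hr.2
    rw [hz0] at this
    exact this
  · intro r hr
    rcases le_or_gt r σ with h | h
    · have := huanti ⟨hzI.1.le, hzI.2.le⟩ ⟨(hzI.1.trans hr.1).le, h⟩ hr.1
      rwa [hz0] at this
    · have := humono ⟨h.le, hr.2.le⟩ (right_mem_Icc.mpr hσR.le) hr.2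
      rwa [huR] at this
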